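/- If a sequence (A_m) of positive semidefinite n×n matrices decreases to A (i.e., A_{m+1} ⪯ A_m for all m and A_m → A), then I(A_m) decreases to I(A), i.e., lim_{m→∞} I(A_m) = inf_m I(A_m) = I(A). -/

import Mathlib

open Matrix ComplexOrder

/-- The minimal Hadamard index `I(A)`. -/
noncomputable def minIdx {k : Type*} [Fintype k] (A : Matrix k k ℂ) : ℝ :=
  sSup {t : ℝ | 0 ≤ t ∧ (A - (t : ℂ) • (Matrix.of fun _ _ => (1 : ℂ))).PosSemidef}

namespace MinIdxAux

variable {n : ℕ}

/-- The all-ones matrix. -/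
noncomputable def Jmat (n : ℕ) : Matrix (Fin n) (Fin n) ℂ :=
  Matrix.of fun _ _ => (1 : ℂ)

lemma mul_nonneg' {c : ℝ} (hc : 0 ≤ c) {z : ℂ} (hz : 0 ≤ z) : 0 ≤ (c : ℂ) * z := by
  rw [Complex.le_def] at hz ⊢
  simp only [Complex.zero_re, Complex.zero_im, Complex.mul_re, Complex.mul_im,
    Complex.ofReal_re, Complex.ofReal_im] at *
  constructor
  · nlinarith [hz.1, hz.2]
  · rw [← hz.2]; ring

lemma Jmat_posSemidef : (Jmat n).PosSemidef := by
  rw [posSemidef_iff_dotProduct_mulVec]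
  constructor
  · ext i j
    simp [Jmat, Matrix.conjTranspose_apply]
  · intro x
    have h : star x ⬝ᵥ (Jmat n) *ᵥ x = star (∑ i, x i) * (∑ i, x i) := by
      simp only [Jmat, dotProduct, mulVec, Pi.star_apply, star_sum, Finset.sum_mul,
        Finset.mul_sum, Matrix.of_apply, one_mul]
      rw [Finset.sum_comm]
    rw [h]
    exact star_mul_self_nonneg _

lemma smul_Jmat_posSemidef {c : ℝ} (hc : 0 ≤ c) : ((c : ℂ) • Jmat n).PosSemidef := by
  rw [posSemidef_iff_dotProduct_mulVec]
  constructor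
  · ext i j
    simp [Jmat, Matrix.conjTranspose_apply, Complex.conj_ofReal]
  · intro x
    rw [Matrix.smul_mulVec, dotProduct_smul, smul_eq_mul]
    exact mul_nonneg' hc (Jmat_posSemidef.dotProduct_mulVec_nonneg x)

lemma isClosed_posSemidef :
    IsClosed {M : Matrix (Fin n) (Fin n) ℂ | M.PosSemidef} := by
  have h1 : {M : Matrix (Fin n) (Fin n) ℂ | M.PosSemidef} =
      {M : Matrix (Fin n) (Fin n) ℂ | Mᴴ = M} ∩
      ⋂ x : Fin n → ℂ, {M | 0 ≤ star x ⬝ᵥ M *ᵥ x} := by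
    ext M
    simp only [posSemidef_iff_dotProduct_mulVec, Set.mem_setOf_eq, Set.mem_inter_iff, Set.mem_iInter]
    exact ⟨fun h => ⟨h.1, h.2⟩, fun h => ⟨h.1, h.2⟩⟩
  rw [h1]
  apply IsClosed.inter
  · exact isClosed_eq (continuous_id.matrix_conjTranspose) continuous_id
  · refine isClosed_iInter fun x => ?_
    have hcont : Continuous fun M : Matrix (Fin n) (Fin n) ℂ => star x ⬝ᵥ M *ᵥ x :=
      (continuous_const : Continuous fun _ : Matrix (Fin n) (Fin n) ℂ => star x).dotProduct
        (continuous_id.matrix_mulVec continuous_const)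
    have hcl : IsClosed {z : ℂ | 0 ≤ z} := by
      have : {z : ℂ | 0 ≤ z} = Complex.re ⁻¹' Set.Ici 0 ∩ Complex.im ⁻¹' {0} := by
        ext z
        simp [Complex.le_def, eq_comm]
      rw [this]
      exact (isClosed_Ici.preimage Complex.continuous_re).inter
        (isClosed_singleton.preimage Complex.continuous_im)
    exact hcl.preimage hcont

/-- The defining set of `minIdx`. -/
def S (M : Matrix (Fin n) (Fin n) ℂ) : Set ℝ :=
  {t : ℝ | 0 ≤ t ∧ (M - (t : ℂ) • Jmat n).PosSemidef}

lemma minIdx_eq (M : Matrix (Fin n) (Fin n) ℂ) : minIdx M = sSup (S M) := rfl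

lemma zero_mem_S {M : Matrix (Fin n) (Fin n) ℂ} (hM : M.PosSemidef) : (0 : ℝ) ∈ S M := by
  refine ⟨le_refl 0, ?_⟩
  simpa using hM

lemma S_subset {M N : Matrix (Fin n) (Fin n) ℂ} (h : (M - N).PosSemidef) : S N ⊆ S M := by
  rintro t ⟨ht0, ht⟩
  refine ⟨ht0, ?_⟩
  have : M - (t : ℂ) • Jmat n = (M - N) + (N - (t : ℂ) • Jmat n) := by abel
  rw [this]
  exact h.add ht

lemma mem_S_of_le {M : Matrix (Fin n) (Fin n) ℂ} {s t : ℝ} (ht : t ∈ S M) (hs0 : 0 ≤ s)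
    (hst : s ≤ t) : s ∈ S M := by
  refine ⟨hs0, ?_⟩
  have key : M - (s : ℂ) • Jmat n =
      (M - (t : ℂ) • Jmat n) + ((((t - s : ℝ)) : ℂ) • Jmat n) := by
    push_cast
    module
  rw [key]
  exact ht.2.add (smul_Jmat_posSemidef (by linarith))

lemma bddAbove_S (hn : 0 < n) {M : Matrix (Fin n) (Fin n) ℂ} : BddAbove (S M) := by
  set o : Fin n → ℂ := fun _ => 1 with ho
  refine ⟨(star o ⬝ᵥ M *ᵥ o).re / (n : ℝ) ^ 2, ?_⟩
  rintro t ⟨ht0, ht⟩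
  have hq : star o ⬝ᵥ (M - (t : ℂ) • Jmat n) *ᵥ o
      = star o ⬝ᵥ M *ᵥ o - (t : ℂ) * (n : ℂ) ^ 2 := by
    rw [Matrix.sub_mulVec, dotProduct_sub, Matrix.smul_mulVec, dotProduct_smul,
      smul_eq_mul]
    congr 1
    have : star o ⬝ᵥ (Jmat n) *ᵥ o = (n : ℂ) ^ 2 := by
      simp [Jmat, dotProduct, mulVec, ho, Finset.sum_const, sq]
    rw [this]
  have hpos := ht.dotProduct_mulVec_nonneg o
  rw [hq] at hpos
  have hle : ((t : ℂ) * (n : ℂ) ^ 2) ≤ star o ⬝ᵥ M *ᵥ o := by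
    rwa [sub_nonneg] at hpos
  have hcast : ((t : ℂ) * (n : ℂ) ^ 2) = ((t * (n : ℝ) ^ 2 : ℝ) : ℂ) := by
    push_cast; ring
  rw [hcast] at hle
  have hre : t * (n : ℝ) ^ 2 ≤ (star o ⬝ᵥ M *ᵥ o).re := by
    have := (Complex.le_def.mp hle).1
    rwa [Complex.ofReal_re] at this
  have hn2 : (0 : ℝ) < (n : ℝ) ^ 2 := by positivity
  rw [le_div_iff₀ hn2]
  exact hre

lemma isClosed_S (M : Matrix (Fin n) (Fin n) ℂ) : IsClosed (S M) := by
  have h1 : S M = Set.Ici (0 : ℝ) ∩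
      ((fun t : ℝ => M - (t : ℂ) • Jmat n) ⁻¹' {N | N.PosSemidef}) := by
    ext t; simp [S, Set.mem_Ici]
  rw [h1]
  refine isClosed_Ici.inter (IsClosed.preimage ?_ isClosed_posSemidef)
  exact continuous_const.sub (Complex.continuous_ofReal.smul continuous_const)

lemma minIdx_mem_S (hn : 0 < n) {M : Matrix (Fin n) (Fin n) ℂ} (hM : M.PosSemidef) :
    minIdx M ∈ S M :=
  (isClosed_S M).csSup_mem ⟨0, zero_mem_S hM⟩ (bddAbove_S hn)

lemma minIdx_nonneg {M : Matrix (Fin n) (Fin n) ℂ} (hn : 0 < n) (hM : M.PosSemidef) :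
    0 ≤ minIdx M :=
  le_csSup (bddAbove_S hn) (zero_mem_S hM)

lemma minIdx_le_minIdx (hn : 0 < n) {M N : Matrix (Fin n) (Fin n) ℂ}
    (hN : N.PosSemidef) (h : (M - N).PosSemidef) : minIdx N ≤ minIdx M :=
  csSup_le_csSup (bddAbove_S hn) ⟨0, zero_mem_S hN⟩ (S_subset h)

end MinIdxAux

/-- If a sequence of positive semidefinite matrices decreases to `A`, then
`I(A_m)` decreases to `I(A)`: the limit and the infimum both equal `I(A)`. -/
theorem minIdx_of_decreasing_limit {n : ℕ} (A : ℕ → Matrix (Fin n) (Fin n) ℂ)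
    (L : Matrix (Fin n) (Fin n) ℂ)
    (hpsd : ∀ m, (A m).PosSemidef) (hL : L.PosSemidef)
    (hdec : ∀ m, (A m - A (m + 1)).PosSemidef)
    (hlim : Filter.Tendsto A Filter.atTop (nhds L)) :
    Filter.Tendsto (fun m => minIdx (A m)) Filter.atTop (nhds (minIdx L)) ∧
    (⨅ m, minIdx (A m)) = minIdx L := by
  open MinIdxAux in
  rcases Nat.eq_zero_or_pos n with hn | hn
  · -- trivial case `n = 0`: all the sets agree
    subst hn
    have hall : ∀ M : Matrix (Fin 0) (Fin 0) ℂ, minIdx M = minIdx L := by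
      intro M
      have hS : ∀ N : Matrix (Fin 0) (Fin 0) ℂ, S N = Set.Ici (0 : ℝ) := by
        intro N
        ext t
        simp only [S, Set.mem_setOf_eq, Set.mem_Ici, and_iff_left_iff_imp]
        intro _
        rw [posSemidef_iff_dotProduct_mulVec]
        constructor
        · ext i j; exact i.elim0
        · intro x; simp [dotProduct]
      rw [minIdx_eq, minIdx_eq, hS, hS]
    have h1 : (fun m => minIdx (A m)) = fun _ => minIdx L := by
      funext m; exact hall (A m)
    constructor
    · rw [h1]; exact tendsto_const_nhds
    · simp only [hall]
      exact ciInf_const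
  · -- main case `0 < n`
    -- `A m - A k` is PSD for `m ≤ k`
    have hstep : ∀ m k, m ≤ k → (A m - A k).PosSemidef := by
      intro m k hmk
      induction k with
      | zero =>
        have : m = 0 := Nat.le_zero.mp hmk
        subst this
        simpa using (Matrix.PosSemidef.zero (n := Fin n) (R := ℂ))
      | succ k ih =>
        rcases Nat.lt_or_ge m (k + 1) with h | h
        · have h' : m ≤ k := Nat.lt_succ_iff.mp h
          have : A m - A (k + 1) = (A m - A k) + (A k - A (k + 1)) := by abel
          rw [this]
          exact (ih h').add (hdec k)
        · have : m = k + 1 := le_antisymm hmk h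
          subst this
          simpa using (Matrix.PosSemidef.zero (n := Fin n) (R := ℂ))
    -- `A m - L` is PSD
    have hmL : ∀ m, (A m - L).PosSemidef := by
      intro m
      have htend : Filter.Tendsto (fun k => A m - A k) Filter.atTop (nhds (A m - L)) :=
        tendsto_const_nhds.sub hlim
      refine isClosed_posSemidef.mem_of_tendsto htend ?_
      filter_upwards [Filter.eventually_ge_atTop m] with k hk
      exact hstep m k hk
    -- the sequence `minIdx (A m)` is antitone
    have hanti : Antitone fun m => minIdx (A m) := by
      apply antitone_nat_of_succ_le
      intro m
      exact minIdx_le_minIdx hn (hpsd (m + 1)) (hdec m)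
    -- bounded below by `minIdx L`
    have hlb : ∀ m, minIdx L ≤ minIdx (A m) := fun m =>
      minIdx_le_minIdx hn hL (hmL m)
    have hbdd : BddBelow (Set.range fun m => minIdx (A m)) := by
      refine ⟨minIdx L, ?_⟩
      rintro x ⟨m, rfl⟩
      exact hlb m
    set t := ⨅ m, minIdx (A m) with htdef
    have htendsto : Filter.Tendsto (fun m => minIdx (A m)) Filter.atTop (nhds t) :=
      tendsto_atTop_ciInf hanti hbdd
    -- `minIdx L ≤ t`
    have h1 : minIdx L ≤ t := le_ciInf hlb
    -- `t ≤ minIdx L`: show `t ∈ S L`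
    have ht0 : 0 ≤ t := le_trans (minIdx_nonneg hn hL) h1
    have htm : ∀ m, t ∈ MinIdxAux.S (A m) := by
      intro m
      exact mem_S_of_le (minIdx_mem_S hn (hpsd m)) ht0 (ciInf_le hbdd m)
    have htL : t ∈ MinIdxAux.S L := by
      refine ⟨ht0, ?_⟩
      have htend : Filter.Tendsto (fun m => A m - (t : ℂ) • Jmat n) Filter.atTop
          (nhds (L - (t : ℂ) • Jmat n)) := hlim.sub tendsto_const_nhds
      refine isClosed_posSemidef.mem_of_tendsto htend ?_
      filter_upwards with m
      exact (htm m).2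
    have h2 : t ≤ minIdx L := le_csSup (bddAbove_S hn) htL
    have heq : t = minIdx L := le_antisymm h2 h1
    rw [heq] at htendsto
    exact ⟨htendsto, heq⟩
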